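/- Define C recursively by C_{α₁α₂} := Λ_{α₁α₂} and C_{α₁⋯α_m} := Σ_δ B_{α₁⋯α_{m−1}}^δ C_{δα_m} + (ℏ∇_{α_m})(C_{α₁⋯α_{m−1}}), with B as in the stated recursion. If U_{αβ} = Σ_ρ B_{αβ}^ρ Γ_ρ + D(C_{αβ}) holds for all α,β, where D := δ_{S+Γ} + ℏΔ, U_{α₁⋯α_m} := (ℏ∇_{α_m})⋯(ℏ∇_{α₁})1, and Γ_ρ := ∂_ρΓ = (ℏ∇_ρ)1, then for all m ≥ 2 and all multi-indices, U_{α₁⋯α_m} = Σ_ρ B_{α₁⋯α_m}^ρ Γ_ρ + D(C_{α₁⋯α_m}). -/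

import Mathlib

open Finset

variable {J : Type} [DecidableEq J] [Fintype J]

/-- `ℂ[x₁,…,xₙ]`. -/
abbrev Px (n : ℕ) := MvPolynomial (Fin n) ℂ
/-- `ℂ[x][[t]]`. -/
abbrev Rt (n : ℕ) (J : Type) := MvPowerSeries J (Px n)
/-- `ℂ[x][[t]][[ℏ]]`. -/
abbrev RtH (n : ℕ) (J : Type) := PowerSeries (Rt n J)
/-- `𝒜[[t]]` with `𝒜 = ℂ[x][η]`. -/
abbrev Et (n : ℕ) (J : Type) := Finset (Fin n) → Rt n J
/-- `𝒜[[t]][[ℏ]]`. -/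
abbrev EH (n : ℕ) (J : Type) := Finset (Fin n) → RtH n J

/-- `∂/∂xᵢ` on `ℂ[x][[t]]`. -/
noncomputable def pdx {n : ℕ} (i : Fin n) (F : Rt n J) : Rt n J :=
  fun e => MvPolynomial.pderiv i (F e)

/-- `∂/∂xᵢ` on `ℂ[x][[t]][[ℏ]]`. -/
noncomputable def pdxH {n : ℕ} (i : Fin n) (F : RtH n J) : RtH n J :=
  PowerSeries.mk fun k => pdx i (PowerSeries.coeff k F)

/-- `∂/∂t^α` on `ℂ[x][[t]]`. -/
noncomputable def tderiv {n : ℕ} (α : J) (f : Rt n J) : Rt n J :=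
  fun e => (e α + 1) • f (e + Finsupp.single α 1)

/-- `∂/∂t^α` on `ℂ[x][[t]][[ℏ]]`. -/
noncomputable def tderivH {n : ℕ} (α : J) (F : RtH n J) : RtH n J :=
  PowerSeries.mk fun k => tderiv α (PowerSeries.coeff k F)

/-- `δ_{S+Γ}` on `𝒜[[t]][[ℏ]]`. -/
noncomputable def deltaSGH {n : ℕ} (S : Px n) (Γ : Rt n J) (a : EH n J) : EH n J :=
  fun T => ∑ i : Fin n,
    if i ∈ T then 0
    else ((-1 : ℤ) ^ (T.filter (· < i)).card) •
      (PowerSeries.C (pdx i (MvPowerSeries.C (σ := J) (R := Px n) S + Γ)) * a (insert i T))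

/-- `Δ = Σᵢ (∂/∂xᵢ)(∂/∂ηᵢ)` on `𝒜[[t]][[ℏ]]`. -/
noncomputable def bvDeltaH {n : ℕ} (a : EH n J) : EH n J :=
  fun T => ∑ i : Fin n,
    if i ∈ T then 0
    else ((-1 : ℤ) ^ (T.filter (· < i)).card) • pdxH i (a (insert i T))

/-- `D = δ_{S+Γ} + ℏΔ`. -/
noncomputable def Dop {n : ℕ} (S : Px n) (Γ : Rt n J) (a : EH n J) : EH n J :=
  fun T => deltaSGH S Γ a T + PowerSeries.X * bvDeltaH a T

/-- `ℏ∇_α(w) = ℏ ∂_α w + (∂_αΓ)·w` on `𝒜[[t]][[ℏ]]`. -/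
noncomputable def hnabla {n : ℕ} (Γ : Rt n J) (α : J) (a : EH n J) : EH n J :=
  fun T => PowerSeries.X * tderivH α (a T) + PowerSeries.C (tderiv α Γ) * a T

/-- Embedding `𝒜[[t]] → 𝒜[[t]][[ℏ]]`. -/
noncomputable def etH {n : ℕ} (a : Et n J) : EH n J := fun T => PowerSeries.C (a T)

/-- Embedding `ℂ[[t]] → ℂ[x][[t]][[ℏ]]`. -/
noncomputable def cAH {n : ℕ} (f : MvPowerSeries J ℂ) : RtH n J :=
  PowerSeries.C (MvPowerSeries.map (σ := J) (algebraMap ℂ (Px n)) f)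

/-- The unit `1 ∈ 𝒜[[t]][[ℏ]]`. -/
noncomputable def oneH {n : ℕ} : EH n J := fun T => if T = ∅ then 1 else 0

/-- `U_{α₁⋯α_m} = (ℏ∇_{α_m})⋯(ℏ∇_{α₁})1`, the multi-index given as a list. -/
noncomputable def Ufull {n : ℕ} (Γ : Rt n J) (L : List J) : EH n J :=
  L.foldl (fun w x => hnabla Γ x w) oneH

/-- `B_{α₁α₂}^ρ = A_{α₁α₂}^ρ`,
`B_{α₁⋯α_m}^ρ = Σ_δ B_{α₁⋯α_{m−1}}^δ B_{δα_m}^ρ + ℏ ∂_{α_m} B_{α₁⋯α_{m−1}}^ρ`;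
`BrecH A α₁ α₂ l ρ = B_{α₁α₂α₃⋯α_m}^ρ` with `l = [α_m,…,α₃]`. -/
noncomputable def BrecH {n : ℕ} (A : J → J → J → MvPowerSeries J ℂ) :
    J → J → List J → J → RtH n J
  | a, b, [], ρ => cAH (A a b ρ)
  | a, b, c :: l, ρ =>
      (∑ δ : J, BrecH A a b l δ * cAH (A δ c ρ)) +
        PowerSeries.X * tderivH c (BrecH A a b l ρ)

/-- `C_{α₁α₂} = Λ_{α₁α₂}`,
`C_{α₁⋯α_m} = Σ_δ B_{α₁⋯α_{m−1}}^δ C_{δα_m} + (ℏ∇_{α_m})(C_{α₁⋯α_{m−1}})`;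
`CrecH A Λ Γ α₁ α₂ l = C_{α₁α₂α₃⋯α_m}` with `l = [α_m,…,α₃]`. -/
noncomputable def CrecH {n : ℕ} (A : J → J → J → MvPowerSeries J ℂ)
    (Λ : J → J → Et n J) (Γ : Rt n J) : J → J → List J → EH n J
  | a, b, [] => etH (Λ a b)
  | a, b, c :: l =>
      fun T => (∑ δ : J, BrecH A a b l δ * etH (Λ δ c) T) +
        hnabla Γ c (CrecH A Λ Γ a b l) T

set_option linter.unusedSectionVars false
set_option maxHeartbeats 1000000
namespace Aux
section
variable {n : ℕ}
variable {n : ℕ}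

theorem coeff_eq (f : Rt n J) (e : J →₀ ℕ) : MvPowerSeries.coeff e f = f e := rfl

theorem tderiv_add (α : J) (f g : Rt n J) : tderiv α (f + g) = tderiv α f + tderiv α g := by
  funext e
  show (e α + 1) • ((f + g) (e + Finsupp.single α 1)) = _
  rw [show (f + g) (e + Finsupp.single α 1) = f (e + Finsupp.single α 1) + g (e + Finsupp.single α 1) from rfl, smul_add]
  rfl

theorem pdx_add (i : Fin n) (f g : Rt n J) : pdx i (f + g) = pdx i f + pdx i g := by
  funext e
  show MvPolynomial.pderiv i ((f + g) (e)) = _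
  rw [show (f + g) e = f e + g e from rfl, map_add]
  rfl

theorem pdx_tderiv (i : Fin n) (α : J) (f : Rt n J) :
    pdx i (tderiv α f) = tderiv α (pdx i f) := by
  funext e; simp [pdx, tderiv]

-- key reindexing lemma
theorem sum_antidiag_fst (α : J) (e : J →₀ ℕ) (h : (J →₀ ℕ) → (J →₀ ℕ) → Px n) :
    ∑ p ∈ (Finset.HasAntidiagonal.antidiagonal (e + Finsupp.single α 1) : Finset ((J →₀ ℕ) × (J →₀ ℕ))), (p.1 α) • h p.1 p.2
      = ∑ p ∈ (Finset.HasAntidiagonal.antidiagonal e : Finset ((J →₀ ℕ) × (J →₀ ℕ))), (p.1 α + 1) • h (p.1 + Finsupp.single α 1) p.2 := by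
  rw [← Finset.sum_filter_of_ne (p := fun p => p.1 α ≠ 0)
    (fun p _ hne => by intro h0; rw [h0] at hne; simp at hne)]
  refine (Finset.sum_nbij' (fun p => (p.1 + Finsupp.single α 1, p.2))
    (fun p => (p.1 - Finsupp.single α 1, p.2)) ?_ ?_ ?_ ?_ ?_).symm
  · intro p hp
    rw [Finset.HasAntidiagonal.mem_antidiagonal] at hp
    simp only [Finset.mem_filter, Finset.HasAntidiagonal.mem_antidiagonal]
    constructor
    · rw [add_right_comm, hp]
    · simp
  · intro p hp
    simp only [Finset.mem_filter, Finset.HasAntidiagonal.mem_antidiagonal] at hp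
    rw [Finset.HasAntidiagonal.mem_antidiagonal]
    have hle : Finsupp.single α 1 ≤ p.1 := Finsupp.single_le_iff.mpr (Nat.one_le_iff_ne_zero.mpr hp.2)
    have : p.1 - Finsupp.single α 1 + Finsupp.single α 1 = p.1 := tsub_add_cancel_of_le hle
    have := congrArg (· + p.2) this
    rw [add_right_comm] at this
    rw [hp.1] at this
    exact add_right_cancel this
  · intro p _; simp
  · intro p hp
    simp only [Finset.mem_filter, Finset.HasAntidiagonal.mem_antidiagonal] at hp
    have hle : Finsupp.single α 1 ≤ p.1 := Finsupp.single_le_iff.mpr (Nat.one_le_iff_ne_zero.mpr hp.2)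
    simp [tsub_add_cancel_of_le hle]
  · intro p _
    simp [Finsupp.add_apply, Finsupp.single_eq_same]

theorem sum_antidiag_snd (α : J) (e : J →₀ ℕ) (h : (J →₀ ℕ) → (J →₀ ℕ) → Px n) :
    ∑ p ∈ (Finset.HasAntidiagonal.antidiagonal (e + Finsupp.single α 1) : Finset ((J →₀ ℕ) × (J →₀ ℕ))), (p.2 α) • h p.1 p.2
      = ∑ p ∈ (Finset.HasAntidiagonal.antidiagonal e : Finset ((J →₀ ℕ) × (J →₀ ℕ))), (p.2 α + 1) • h p.1 (p.2 + Finsupp.single α 1) := by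
  rw [← Finset.sum_filter_of_ne (p := fun p => p.2 α ≠ 0)
    (fun p _ hne => by intro h0; rw [h0] at hne; simp at hne)]
  refine (Finset.sum_nbij' (fun p => (p.1, p.2 + Finsupp.single α 1))
    (fun p => (p.1, p.2 - Finsupp.single α 1)) ?_ ?_ ?_ ?_ ?_).symm
  · intro p hp
    rw [Finset.HasAntidiagonal.mem_antidiagonal] at hp
    simp only [Finset.mem_filter, Finset.HasAntidiagonal.mem_antidiagonal]
    constructor
    · rw [← add_assoc, hp]
    · simp
  · intro p hp
    simp only [Finset.mem_filter, Finset.HasAntidiagonal.mem_antidiagonal] at hp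
    rw [Finset.HasAntidiagonal.mem_antidiagonal]
    have hle : Finsupp.single α 1 ≤ p.2 := Finsupp.single_le_iff.mpr (Nat.one_le_iff_ne_zero.mpr hp.2)
    have h1 : p.2 - Finsupp.single α 1 + Finsupp.single α 1 = p.2 := tsub_add_cancel_of_le hle
    have h2 : p.1 + (p.2 - Finsupp.single α 1) + Finsupp.single α 1 = e + Finsupp.single α 1 := by
      rw [add_assoc, h1, hp.1]
    exact add_right_cancel h2
  · intro p _; simp
  · intro p hp
    simp only [Finset.mem_filter, Finset.HasAntidiagonal.mem_antidiagonal] at hp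
    have hle : Finsupp.single α 1 ≤ p.2 := Finsupp.single_le_iff.mpr (Nat.one_le_iff_ne_zero.mpr hp.2)
    simp [tsub_add_cancel_of_le hle]
  · intro p _
    simp [Finsupp.add_apply, Finsupp.single_eq_same]

theorem tderiv_mul (α : J) (f g : Rt n J) :
    tderiv α (f * g) = tderiv α f * g + f * tderiv α g := by
  apply MvPowerSeries.ext; intro e
  rw [coeff_eq, map_add, MvPowerSeries.coeff_mul, MvPowerSeries.coeff_mul]
  show (e α + 1) • ((f*g) (e + Finsupp.single α 1)) = _
  rw [show ((f*g) (e + Finsupp.single α 1)) = MvPowerSeries.coeff _ (f*g) from rfl,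
    MvPowerSeries.coeff_mul]
  simp only [coeff_eq]
  rw [Finset.smul_sum]
  have : ∀ p ∈ (Finset.HasAntidiagonal.antidiagonal (e + Finsupp.single α 1) : Finset ((J →₀ ℕ) × (J →₀ ℕ))),
      (e α + 1) • (f p.1 * g p.2) = (p.1 α) • (f p.1 * g p.2) + (p.2 α) • (f p.1 * g p.2) := by
    intro p hp
    rw [Finset.HasAntidiagonal.mem_antidiagonal] at hp
    rw [← add_nsmul]
    congr 1
    have := congrArg (fun q : J →₀ ℕ => q α) hp
    simpa [Finsupp.add_apply] using this.symm
  rw [Finset.sum_congr rfl this, Finset.sum_add_distrib,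
    sum_antidiag_fst α e (fun u v => f u * g v), sum_antidiag_snd α e (fun u v => f u * g v)]
  congr 1
  · apply Finset.sum_congr rfl; intro p _
    show (p.1 α + 1) • (f (p.1 + Finsupp.single α 1) * g p.2) = tderiv α f p.1 * g p.2
    rw [tderiv, smul_mul_assoc]
  · apply Finset.sum_congr rfl; intro p _
    show (p.2 α + 1) • (f p.1 * g (p.2 + Finsupp.single α 1)) = f p.1 * tderiv α g p.2
    rw [tderiv, mul_smul_comm]

theorem pdx_mul (i : Fin n) (f g : Rt n J) :
    pdx i (f * g) = pdx i f * g + f * pdx i g := by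
  apply MvPowerSeries.ext; intro e
  rw [coeff_eq, map_add, MvPowerSeries.coeff_mul, MvPowerSeries.coeff_mul]
  show MvPolynomial.pderiv i ((f*g) e) = _
  rw [show ((f*g) e) = MvPowerSeries.coeff _ (f*g) from rfl, MvPowerSeries.coeff_mul]
  simp only [coeff_eq, map_sum]
  rw [← Finset.sum_add_distrib]
  apply Finset.sum_congr rfl; intro p _
  show MvPolynomial.pderiv i (f p.1 * g p.2) = pdx i f p.1 * g p.2 + f p.1 * pdx i g p.2
  rw [MvPolynomial.pderiv_mul]; rfl

end
end Aux
namespace Aux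
variable {n : ℕ}

noncomputable def tderivAM (α : J) : Rt n J →+ Rt n J := AddMonoidHom.mk' (tderiv α) (tderiv_add α)
noncomputable def pdxAM (i : Fin n) : Rt n J →+ Rt n J := AddMonoidHom.mk' (pdx i) (pdx_add i)

theorem coeff_tderivH (α : J) (k : ℕ) (F : RtH n J) :
    PowerSeries.coeff k (tderivH α F) = tderiv α (PowerSeries.coeff k F) :=
  PowerSeries.coeff_mk _ _

theorem coeff_pdxH (i : Fin n) (k : ℕ) (F : RtH n J) :
    PowerSeries.coeff k (pdxH i F) = pdx i (PowerSeries.coeff k F) :=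
  PowerSeries.coeff_mk _ _

theorem tderivH_add (α : J) (F G : RtH n J) : tderivH α (F + G) = tderivH α F + tderivH α G := by
  ext k; simp [coeff_tderivH, tderiv_add]

theorem pdxH_add (i : Fin n) (F G : RtH n J) : pdxH i (F + G) = pdxH i F + pdxH i G := by
  ext k; simp [coeff_pdxH, pdx_add]

noncomputable def tderivHAM (α : J) : RtH n J →+ RtH n J := AddMonoidHom.mk' (tderivH α) (tderivH_add α)
noncomputable def pdxHAM (i : Fin n) : RtH n J →+ RtH n J := AddMonoidHom.mk' (pdxH i) (pdxH_add i)

theorem tderivH_sum {β : Type*} (α : J) (s : Finset β) (f : β → RtH n J) :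
    tderivH α (∑ x ∈ s, f x) = ∑ x ∈ s, tderivH α (f x) := map_sum (tderivHAM α) f s

theorem pdxH_sum {β : Type*} (i : Fin n) (s : Finset β) (f : β → RtH n J) :
    pdxH i (∑ x ∈ s, f x) = ∑ x ∈ s, pdxH i (f x) := map_sum (pdxHAM i) f s

theorem tderivH_zsmul (α : J) (m : ℤ) (F : RtH n J) : tderivH α (m • F) = m • tderivH α F :=
  map_zsmul (tderivHAM α) m F

theorem pdxH_zsmul (i : Fin n) (m : ℤ) (F : RtH n J) : pdxH i (m • F) = m • pdxH i F :=
  map_zsmul (pdxHAM i) m F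

theorem tderiv_sum {β : Type*} (α : J) (s : Finset β) (f : β → Rt n J) :
    tderiv α (∑ x ∈ s, f x) = ∑ x ∈ s, tderiv α (f x) := map_sum (tderivAM α) f s

theorem pdx_sum {β : Type*} (i : Fin n) (s : Finset β) (f : β → Rt n J) :
    pdx i (∑ x ∈ s, f x) = ∑ x ∈ s, pdx i (f x) := map_sum (pdxAM i) f s

theorem tderiv_zero (α : J) : tderiv α (0 : Rt n J) = 0 := by
  funext e; show (e α + 1) • ((0 : Rt n J) _) = 0; exact smul_zero _

theorem tderiv_one (α : J) : tderiv α (1 : Rt n J) = 0 := by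
  funext e
  show (e α + 1) • (MvPowerSeries.coeff (e + Finsupp.single α 1) 1) = 0
  rw [MvPowerSeries.coeff_one, if_neg, smul_zero]
  intro h
  have := congrArg (fun q : J →₀ ℕ => q α) h
  simp [Finsupp.add_apply] at this

theorem pdx_zero (i : Fin n) : pdx i (0 : Rt n J) = 0 := by
  funext e; show MvPolynomial.pderiv i ((0 : Rt n J) e) = 0
  show MvPolynomial.pderiv i 0 = 0; simp

theorem tderivH_mul (α : J) (F G : RtH n J) :
    tderivH α (F * G) = tderivH α F * G + F * tderivH α G := by
  apply PowerSeries.ext; intro k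
  rw [coeff_tderivH, map_add, PowerSeries.coeff_mul, PowerSeries.coeff_mul, PowerSeries.coeff_mul]
  rw [tderiv_sum]
  rw [← Finset.sum_add_distrib]
  apply Finset.sum_congr rfl; intro p _
  show tderiv α (_ * _) = _
  rw [tderiv_mul]
  simp [coeff_tderivH]

theorem pdxH_mul (i : Fin n) (F G : RtH n J) :
    pdxH i (F * G) = pdxH i F * G + F * pdxH i G := by
  apply PowerSeries.ext; intro k
  rw [coeff_pdxH, map_add, PowerSeries.coeff_mul, PowerSeries.coeff_mul, PowerSeries.coeff_mul]
  rw [pdx_sum]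
  rw [← Finset.sum_add_distrib]
  apply Finset.sum_congr rfl; intro p _
  show pdx i (_ * _) = _
  rw [pdx_mul]
  simp [coeff_pdxH]

theorem tderivH_X (α : J) : tderivH α (PowerSeries.X : RtH n J) = 0 := by
  apply PowerSeries.ext; intro k
  rw [coeff_tderivH, PowerSeries.coeff_X]
  split
  · rw [tderiv_one]; simp
  · rw [tderiv_zero]; simp

theorem pdxH_X (i : Fin n) : pdxH i (PowerSeries.X : RtH n J) = 0 := by
  apply PowerSeries.ext; intro k
  rw [coeff_pdxH, PowerSeries.coeff_X]
  split
  · show pdx i 1 = _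
    funext e
    show MvPolynomial.pderiv i (MvPowerSeries.coeff e 1) = _
    rw [MvPowerSeries.coeff_one]
    split <;> simp <;> rfl
  · rw [pdx_zero]; simp

theorem tderivH_C (α : J) (r : Rt n J) :
    tderivH α (PowerSeries.C r) = PowerSeries.C (tderiv α r) := by
  apply PowerSeries.ext; intro k
  rw [coeff_tderivH, PowerSeries.coeff_C, PowerSeries.coeff_C]
  split
  · rfl
  · rw [tderiv_zero]

theorem pdxH_C (i : Fin n) (r : Rt n J) :
    pdxH i (PowerSeries.C r) = PowerSeries.C (pdx i r) := by
  apply PowerSeries.ext; intro k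
  rw [coeff_pdxH, PowerSeries.coeff_C, PowerSeries.coeff_C]
  split
  · rfl
  · rw [pdx_zero]

theorem pdxH_tderivH (i : Fin n) (α : J) (F : RtH n J) :
    pdxH i (tderivH α F) = tderivH α (pdxH i F) := by
  apply PowerSeries.ext; intro k
  rw [coeff_pdxH, coeff_tderivH, coeff_tderivH, coeff_pdxH, pdx_tderiv]

theorem tderivH_X_mul (α : J) (F : RtH n J) :
    tderivH α (PowerSeries.X * F) = PowerSeries.X * tderivH α F := by
  rw [tderivH_mul, tderivH_X, zero_mul, zero_add]

theorem pdxH_X_mul (i : Fin n) (F : RtH n J) :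
    pdxH i (PowerSeries.X * F) = PowerSeries.X * pdxH i F := by
  rw [pdxH_mul, pdxH_X, zero_mul, zero_add]

theorem tderiv_CS (α : J) (S : Px n) : tderiv α (MvPowerSeries.C (σ := J) (R := Px n) S) = 0 := by
  funext e
  show (e α + 1) • (MvPowerSeries.coeff (e + Finsupp.single α 1) (MvPowerSeries.C (σ := J) (R := Px n) S)) = 0
  rw [MvPowerSeries.coeff_C, if_neg, smul_zero]
  intro h
  have := congrArg (fun q : J →₀ ℕ => q α) h
  simp [Finsupp.add_apply] at this

theorem pdx_cA (i : Fin n) (f : MvPowerSeries J ℂ) :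
    pdx i (MvPowerSeries.map (σ := J) (algebraMap ℂ (Px n)) f) = 0 := by
  funext e
  show MvPolynomial.pderiv i
    (MvPowerSeries.coeff e (MvPowerSeries.map (σ := J) (algebraMap ℂ (Px n)) f)) = 0
  rw [MvPowerSeries.coeff_map]
  have : (algebraMap ℂ (Px n)) (MvPowerSeries.coeff e f) =
      MvPolynomial.C (MvPowerSeries.coeff e f) := rfl
  rw [this, MvPolynomial.pderiv_C]

theorem pdxH_cAH (i : Fin n) (f : MvPowerSeries J ℂ) : pdxH i (cAH (n := n) f) = 0 := by
  rw [cAH, pdxH_C, pdx_cA, map_zero]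

theorem pdxH_BrecH (A : J → J → J → MvPowerSeries J ℂ) (i : Fin n) (a b : J) (l : List J) (ρ : J) :
    pdxH i (BrecH (n := n) A a b l ρ) = 0 := by
  induction l generalizing ρ with
  | nil => exact pdxH_cAH i _
  | cons c l ih =>
      rw [BrecH, pdxH_add, pdxH_sum, pdxH_X_mul, pdxH_tderivH, ih]
      have : ∀ δ ∈ (Finset.univ : Finset J),
          pdxH i (BrecH (n := n) A a b l δ * cAH (A δ c ρ)) = 0 := by
        intro δ _
        rw [pdxH_mul, ih, pdxH_cAH, zero_mul, mul_zero, add_zero]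
      rw [Finset.sum_congr rfl this]
      rw [show tderivH c (0 : RtH n J) = 0 from map_zero (tderivHAM c)]
      simp


theorem tderivH_zero (α : J) : tderivH α (0 : RtH n J) = 0 := map_zero (tderivHAM (n := n) α)
theorem pdxH_zero (i : Fin n) : pdxH i (0 : RtH n J) = 0 := map_zero (pdxHAM (n := n) i)

theorem tderiv_pdx_SG (c : J) (i : Fin n) (S : Px n) (Γ : Rt n J) :
    tderiv c (pdx i (MvPowerSeries.C (σ := J) (R := Px n) S + Γ)) = pdx i (tderiv c Γ) := by
  rw [← pdx_tderiv, tderiv_add, tderiv_CS, zero_add]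

theorem Dcomm (S : Px n) (Γ : Rt n J) (c : J) (w : EH n J) :
    Dop S Γ (hnabla Γ c w) = hnabla Γ c (Dop S Γ w) := by
  funext T
  show deltaSGH S Γ (hnabla Γ c w) T + PowerSeries.X * bvDeltaH (hnabla Γ c w) T
      = PowerSeries.X * tderivH c (deltaSGH S Γ w T + PowerSeries.X * bvDeltaH w T)
        + PowerSeries.C (tderiv c Γ) * (deltaSGH S Γ w T + PowerSeries.X * bvDeltaH w T)
  rw [tderivH_add, tderivH_X_mul]
  simp only [deltaSGH, bvDeltaH, tderivH_sum, Finset.mul_sum, mul_add]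
  simp only [← Finset.sum_add_distrib]
  apply Finset.sum_congr rfl
  intro i _
  by_cases hi : i ∈ T
  · simp [hi, tderivH_zero]
  · simp only [if_neg hi]
    have hval : (hnabla Γ c w) (insert i T) =
        PowerSeries.X * tderivH c (w (insert i T))
          + PowerSeries.C (tderiv c Γ) * w (insert i T) := rfl
    rw [hval]
    rw [pdxH_add, pdxH_X_mul, pdxH_tderivH, pdxH_mul, pdxH_C]
    rw [tderivH_zsmul, tderivH_zsmul, tderivH_mul, tderivH_C, tderiv_pdx_SG]
    simp only [zsmul_eq_mul]
    ring

theorem Dop_zero (S : Px n) (Γ : Rt n J) :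
    Dop S Γ (fun _ => (0 : RtH n J)) = fun _ => 0 := by
  funext T
  show deltaSGH S Γ _ T + _ * bvDeltaH _ T = 0
  simp [deltaSGH, bvDeltaH, pdxH_zero]

theorem Dop_add (S : Px n) (Γ : Rt n J) (u v : EH n J) :
    Dop S Γ (fun T => u T + v T) = fun T => Dop S Γ u T + Dop S Γ v T := by
  funext T
  show deltaSGH S Γ _ T + PowerSeries.X * bvDeltaH _ T
    = (deltaSGH S Γ u T + PowerSeries.X * bvDeltaH u T)
      + (deltaSGH S Γ v T + PowerSeries.X * bvDeltaH v T)
  simp only [deltaSGH, bvDeltaH, Finset.mul_sum]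
  simp only [← Finset.sum_add_distrib]
  apply Finset.sum_congr rfl
  intro i _
  by_cases hi : i ∈ T
  · simp [hi]
  · simp only [if_neg hi]
    rw [pdxH_add]
    simp only [zsmul_eq_mul]
    ring

theorem Dop_smul (S : Px n) (Γ : Rt n J) (F : RtH n J) (hF : ∀ i, pdxH i F = 0) (w : EH n J) :
    Dop S Γ (fun T => F * w T) = fun T => F * Dop S Γ w T := by
  funext T
  show deltaSGH S Γ _ T + PowerSeries.X * bvDeltaH _ T
    = F * (deltaSGH S Γ w T + PowerSeries.X * bvDeltaH w T)
  simp only [deltaSGH, bvDeltaH, mul_add, Finset.mul_sum]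
  simp only [← Finset.sum_add_distrib]
  apply Finset.sum_congr rfl
  intro i _
  by_cases hi : i ∈ T
  · simp [hi]
  · simp only [if_neg hi]
    rw [pdxH_mul, hF i]
    simp only [zsmul_eq_mul]
    ring

theorem Dop_sum {β : Type*} (S : Px n) (Γ : Rt n J) (s : Finset β) (f : β → EH n J) :
    Dop S Γ (fun T => ∑ x ∈ s, f x T) = fun T => ∑ x ∈ s, Dop S Γ (f x) T := by
  classical
  induction s using Finset.induction_on with
  | empty => simpa using Dop_zero S Γ
  | insert a s hx ih =>
      rw [show (fun T => ∑ x ∈ insert a s, f x T) = (fun T => f a T + ∑ x ∈ s, f x T) from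
        by funext T; rw [Finset.sum_insert hx]]
      rw [Dop_add, ih]
      funext T
      rw [Finset.sum_insert hx]

theorem hnabla_add (Γ : Rt n J) (c : J) (u v : EH n J) :
    hnabla Γ c (fun T => u T + v T) = fun T => hnabla Γ c u T + hnabla Γ c v T := by
  funext T
  show PowerSeries.X * tderivH c (u T + v T) + PowerSeries.C (tderiv c Γ) * (u T + v T) = _
  rw [tderivH_add]
  show _ = PowerSeries.X * tderivH c (u T) + PowerSeries.C (tderiv c Γ) * u T
    + (PowerSeries.X * tderivH c (v T) + PowerSeries.C (tderiv c Γ) * v T)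
  ring

theorem hnabla_sum_smul (Γ : Rt n J) (c : J) (B : J → RtH n J) (wf : J → EH n J) :
    hnabla Γ c (fun T => ∑ ρ : J, B ρ * wf ρ T)
      = fun T => (∑ ρ : J, (PowerSeries.X * tderivH c (B ρ)) * wf ρ T)
          + ∑ ρ : J, B ρ * hnabla Γ c (wf ρ) T := by
  funext T
  show PowerSeries.X * tderivH c (∑ ρ : J, B ρ * wf ρ T)
      + PowerSeries.C (tderiv c Γ) * ∑ ρ : J, B ρ * wf ρ T = _
  rw [tderivH_sum, Finset.mul_sum, Finset.mul_sum, ← Finset.sum_add_distrib, ← Finset.sum_add_distrib]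
  apply Finset.sum_congr rfl
  intro ρ _
  rw [tderivH_mul]
  have : hnabla Γ c (wf ρ) T = PowerSeries.X * tderivH c (wf ρ T)
      + PowerSeries.C (tderiv c Γ) * wf ρ T := rfl
  rw [this]
  ring


end Aux

/-- If `U_{αβ} = Σ_ρ B_{αβ}^ρ Γ_ρ + D(C_{αβ})` holds for all `α,β` (with
`Γ_ρ = ∂_ρΓ = (ℏ∇_ρ)1` and `D = δ_{S+Γ} + ℏΔ`), then for all `m ≥ 2` and all
multi-indices `α₁⋯α_m`, `U_{α₁⋯α_m} = Σ_ρ B_{α₁⋯α_m}^ρ Γ_ρ + D(C_{α₁⋯α_m})`. -/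
theorem U_eq_B_Gamma_plus_DC (n : ℕ) (S : Px n) (Γ : Rt n J)
    (A : J → J → J → MvPowerSeries J ℂ) (Λ : J → J → Et n J)
    (hΛ : ∀ α β (T : Finset (Fin n)), T.card ≠ 1 → Λ α β T = 0)
    (hbase : ∀ a b : J,
      Ufull Γ [a, b] =
        fun T => (∑ ρ : J, cAH (A a b ρ) * hnabla Γ ρ oneH T) +
          Dop S Γ (etH (Λ a b)) T) :
    ∀ (a b : J) (l : List J),
      Ufull Γ (a :: b :: l.reverse) =
        fun T => (∑ ρ : J, BrecH A a b l ρ * hnabla Γ ρ oneH T) +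
          Dop S Γ (CrecH A Λ Γ a b l) T := by
  classical
  intro a b l
  induction l with
  | nil => exact hbase a b
  | cons c l ih =>
      have h1 : Ufull Γ (a :: b :: (c :: l).reverse) = hnabla Γ c (Ufull Γ (a :: b :: l.reverse)) := by
        simp [Ufull, List.reverse_cons, List.foldl_append]
      rw [h1, ih]
      rw [show (fun T => (∑ ρ : J, BrecH A a b l ρ * hnabla Γ ρ oneH T) +
            Dop S Γ (CrecH A Λ Γ a b l) T)
          = (fun T => (fun T' => ∑ ρ : J, BrecH A a b l ρ * hnabla Γ ρ oneH T') T +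
              (fun T' => Dop S Γ (CrecH A Λ Γ a b l) T') T) from rfl]
      rw [Aux.hnabla_add]
      rw [show (fun T' => Dop S Γ (CrecH A Λ Γ a b l) T') = Dop S Γ (CrecH A Λ Γ a b l) from rfl]
      rw [← Aux.Dcomm]
      rw [Aux.hnabla_sum_smul]
      funext T
      beta_reduce
      -- rewrite hnabla c (hnabla ρ oneH) via hbase
      have hUρ : ∀ ρ : J, hnabla Γ c (hnabla Γ ρ oneH) = Ufull Γ [ρ, c] := fun ρ => rfl
      have h2 : ∀ ρ : J, BrecH (n := n) A a b l ρ * hnabla Γ c (hnabla Γ ρ oneH) T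
          = BrecH (n := n) A a b l ρ *
            ((∑ δ : J, cAH (A ρ c δ) * hnabla Γ δ oneH T) + Dop S Γ (etH (Λ ρ c)) T) := by
        intro ρ
        rw [hUρ ρ, hbase ρ c]
      rw [Finset.sum_congr rfl (fun ρ _ => h2 ρ)]
      -- expand products
      have h3 : ∑ ρ : J, BrecH (n := n) A a b l ρ *
            ((∑ δ : J, cAH (A ρ c δ) * hnabla Γ δ oneH T) + Dop S Γ (etH (Λ ρ c)) T)
          = (∑ δ : J, (∑ ρ : J, BrecH (n := n) A a b l ρ * cAH (A ρ c δ)) * hnabla Γ δ oneH T)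
            + ∑ ρ : J, BrecH (n := n) A a b l ρ * Dop S Γ (etH (Λ ρ c)) T := by
        have e1 : ∀ ρ : J, BrecH (n := n) A a b l ρ *
              ((∑ δ : J, cAH (A ρ c δ) * hnabla Γ δ oneH T) + Dop S Γ (etH (Λ ρ c)) T)
            = (∑ δ : J, BrecH (n := n) A a b l ρ * (cAH (A ρ c δ) * hnabla Γ δ oneH T))
              + BrecH (n := n) A a b l ρ * Dop S Γ (etH (Λ ρ c)) T := fun ρ => by
          rw [mul_add, Finset.mul_sum]
        rw [Finset.sum_congr rfl (fun ρ _ => e1 ρ), Finset.sum_add_distrib]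
        congr 1
        rw [Finset.sum_comm]
        apply Finset.sum_congr rfl
        intro δ _
        rw [Finset.sum_mul]
        apply Finset.sum_congr rfl
        intro ρ _
        ring
      rw [h3]
      -- D of the new C
      have h4 : Dop S Γ (CrecH A Λ Γ a b (c :: l)) T
          = (∑ ρ : J, BrecH (n := n) A a b l ρ * Dop S Γ (etH (Λ ρ c)) T)
            + Dop S Γ (hnabla Γ c (CrecH A Λ Γ a b l)) T := by
        rw [show CrecH A Λ Γ a b (c :: l)
            = (fun T => (fun T' => ∑ δ : J, BrecH (n := n) A a b l δ * etH (Λ δ c) T') T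
                + (fun T' => hnabla Γ c (CrecH A Λ Γ a b l) T') T) from rfl]
        rw [Aux.Dop_add]
        beta_reduce
        congr 1
        · rw [Aux.Dop_sum]
          beta_reduce
          apply Finset.sum_congr rfl
          intro ρ _
          exact congrFun (Aux.Dop_smul S Γ _ (fun i => Aux.pdxH_BrecH A i a b l ρ) (etH (Λ ρ c))) T
      rw [h4]
      -- B recursion
      have h5 : ∀ δ : J, BrecH (n := n) A a b (c :: l) δ
          = (∑ ρ : J, BrecH (n := n) A a b l ρ * cAH (A ρ c δ))
            + PowerSeries.X * tderivH c (BrecH (n := n) A a b l δ) := fun δ => by rw [BrecH]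
      have h6 : ∑ δ : J, BrecH (n := n) A a b (c :: l) δ * hnabla Γ δ oneH T
          = ∑ δ : J, ((∑ ρ : J, BrecH (n := n) A a b l ρ * cAH (A ρ c δ)) * hnabla Γ δ oneH T
              + (PowerSeries.X * tderivH c (BrecH (n := n) A a b l δ)) * hnabla Γ δ oneH T) :=
        Finset.sum_congr rfl (fun δ _ => by rw [h5 δ, add_mul])
      rw [h6, Finset.sum_add_distrib]
      ring
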